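/- Every isomorphism-invariant subset P ⊆ 𝒢 that has the Baire property (i.e., P equals the symmetric difference of an open set and a meager set) is either meager or comeager in 𝒢. -/

import Mathlib

/-- The set of group multiplication tables on `ℕ` with identity `0`. -/
def GroupTables : Set (ℕ × ℕ → ℕ) :=
  {m | (∀ a b c : ℕ, m (m (a, b), c) = m (a, m (b, c))) ∧
       (∀ a : ℕ, m (a, 0) = a) ∧
       (∀ a : ℕ, m (0, a) = a) ∧
       (∀ a : ℕ, ∃ b : ℕ, m (a, b) = 0 ∧ m (b, a) = 0)}

/-- The carrier of the group `Ḡ` associated to a table `G ∈ 𝒢` (a copy of `ℕ`). -/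
def Carrier (_G : ↥GroupTables) : Type := ℕ

noncomputable instance instGroupCarrier (G : ↥GroupTables) : Group (Carrier G) where
  mul a b := G.1 (a, b)
  one := (0 : ℕ)
  inv a := Classical.choose (G.2.2.2.2 a)
  mul_assoc a b c := G.2.1 a b c
  one_mul a := G.2.2.2.1 a
  mul_one a := G.2.2.1 a
  inv_mul_cancel a := (Classical.choose_spec (G.2.2.2.2 a)).2

/-- Inclusion of `ℕ` into the carrier of `Ḡ`. -/
def toC (G : ↥GroupTables) (n : ℕ) : Carrier G := n

/-- Projection of the carrier of `Ḡ` back to `ℕ`. -/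
def fromC (G : ↥GroupTables) (x : Carrier G) : ℕ := x

/-- A set of tables is isomorphism-invariant if membership only depends on the
isomorphism type of the associated group. -/
def IsoInvariant (P : Set ↥GroupTables) : Prop :=
  ∀ G H : ↥GroupTables, Nonempty (Carrier G ≃* Carrier H) → (G ∈ P ↔ H ∈ P)

/-! ### Auxiliary material -/

open Topology Filter Set

section ContinuityHelpers

lemma continuous_of_locally_eq {X Y : Type*} [TopologicalSpace X] [TopologicalSpace Y]
    [DiscreteTopology Y] {f : X → Y} (h : ∀ x, ∀ᶠ y in 𝓝 x, f y = f x) : Continuous f := by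
  rw [continuous_iff_continuousAt]
  intro x
  exact tendsto_nhds_of_eventually_eq (h x)

lemma eventually_eq_of_cont {X B : Type*} [TopologicalSpace X] [TopologicalSpace B]
    [DiscreteTopology B] {q : X → B} (hq : Continuous q) (x : X) :
    ∀ᶠ y in 𝓝 x, q y = q x :=
  (hq.isOpen_preimage _ (isOpen_discrete {q x})).mem_nhds rfl

lemma continuous_eval_comp {X I B : Type*} [TopologicalSpace X] [TopologicalSpace I]
    [DiscreteTopology I] [TopologicalSpace B] [DiscreteTopology B]
    {F : X → I → B} {q : X → I} (hF : Continuous F) (hq : Continuous q) :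
    Continuous fun x => F x (q x) := by
  apply continuous_of_locally_eq
  intro x
  have h1 : ∀ᶠ y in 𝓝 x, q y = q x := eventually_eq_of_cont hq x
  have h2 : ∀ᶠ y in 𝓝 x, F y (q x) = F x (q x) :=
    eventually_eq_of_cont ((continuous_apply (q x)).comp hF) x
  filter_upwards [h1, h2] with y e1 e2
  rw [e1, e2]

end ContinuityHelpers

section Baire

/-- Uniqueness of (two-sided) inverses in a group table. -/
lemma tinv_unique {m : ℕ × ℕ → ℕ} (hm : m ∈ GroupTables) {a b c : ℕ}
    (h2 : m (b, a) = 0) (h3 : m (a, c) = 0) : b = c :=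
  calc b = m (b, 0) := (hm.2.1 b).symm
    _ = m (b, m (a, c)) := by rw [h3]
    _ = m (m (b, a), c) := (hm.1 b a c).symm
    _ = m (0, c) := by rw [h2]
    _ = c := hm.2.2.1 c

noncomputable def invF (G : ↥GroupTables) (a : ℕ) : ℕ := Classical.choose (G.2.2.2.2 a)

lemma invF_spec (G : ↥GroupTables) (a : ℕ) :
    G.1 (a, invF G a) = 0 ∧ G.1 (invF G a, a) = 0 := Classical.choose_spec (G.2.2.2.2 a)

abbrev Amb := (ℕ × ℕ → ℕ) × (ℕ → ℕ)

def TableC : Set Amb :=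
  {p | (∀ a b c : ℕ, p.1 (p.1 (a, b), c) = p.1 (a, p.1 (b, c))) ∧
       (∀ a : ℕ, p.1 (a, 0) = a) ∧ (∀ a : ℕ, p.1 (0, a) = a) ∧
       (∀ a : ℕ, p.1 (a, p.2 a) = 0 ∧ p.1 (p.2 a, a) = 0)}

lemma cont_fst_eval (q : ℕ × ℕ) : Continuous fun p : Amb => p.1 q :=
  (continuous_apply q).comp continuous_fst

lemma cont_snd_eval (a : ℕ) : Continuous fun p : Amb => p.2 a :=
  (continuous_apply a).comp continuous_snd

lemma isClosed_tableC : IsClosed TableC := by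
  have h1 : IsClosed {p : Amb | ∀ a b c : ℕ, p.1 (p.1 (a, b), c) = p.1 (a, p.1 (b, c))} := by
    have : {p : Amb | ∀ a b c : ℕ, p.1 (p.1 (a, b), c) = p.1 (a, p.1 (b, c))}
        = ⋂ (a : ℕ) (b : ℕ) (c : ℕ), {p : Amb | p.1 (p.1 (a, b), c) = p.1 (a, p.1 (b, c))} := by
      ext p; simp [Set.mem_iInter]
    rw [this]
    refine isClosed_iInter fun a => isClosed_iInter fun b => isClosed_iInter fun c => ?_
    exact isClosed_eq
      (continuous_eval_comp continuous_fst (((cont_fst_eval (a, b))).prodMk continuous_const))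
      (continuous_eval_comp continuous_fst ((continuous_const).prodMk (cont_fst_eval (b, c))))
  have h2 : IsClosed {p : Amb | ∀ a : ℕ, p.1 (a, 0) = a} := by
    have : {p : Amb | ∀ a : ℕ, p.1 (a, 0) = a} = ⋂ a : ℕ, {p : Amb | p.1 (a, 0) = a} := by
      ext p; simp [Set.mem_iInter]
    rw [this]
    exact isClosed_iInter fun a => isClosed_eq (cont_fst_eval _) continuous_const
  have h3 : IsClosed {p : Amb | ∀ a : ℕ, p.1 (0, a) = a} := by
    have : {p : Amb | ∀ a : ℕ, p.1 (0, a) = a} = ⋂ a : ℕ, {p : Amb | p.1 (0, a) = a} := by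
      ext p; simp [Set.mem_iInter]
    rw [this]
    exact isClosed_iInter fun a => isClosed_eq (cont_fst_eval _) continuous_const
  have h4 : IsClosed {p : Amb | ∀ a : ℕ, p.1 (a, p.2 a) = 0 ∧ p.1 (p.2 a, a) = 0} := by
    have : {p : Amb | ∀ a : ℕ, p.1 (a, p.2 a) = 0 ∧ p.1 (p.2 a, a) = 0}
        = ⋂ a : ℕ, ({p : Amb | p.1 (a, p.2 a) = 0} ∩ {p : Amb | p.1 (p.2 a, a) = 0}) := by
      ext p; simp [Set.mem_iInter, Set.mem_inter_iff]
    rw [this]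
    refine isClosed_iInter fun a => IsClosed.inter ?_ ?_
    · exact isClosed_eq (continuous_eval_comp continuous_fst
        ((continuous_const).prodMk (cont_snd_eval a))) continuous_const
    · exact isClosed_eq (continuous_eval_comp continuous_fst
        ((cont_snd_eval a).prodMk continuous_const)) continuous_const
  have heq : TableC = {p : Amb | ∀ a b c : ℕ, p.1 (p.1 (a, b), c) = p.1 (a, p.1 (b, c))}
      ∩ ({p : Amb | ∀ a : ℕ, p.1 (a, 0) = a} ∩ ({p : Amb | ∀ a : ℕ, p.1 (0, a) = a}
      ∩ {p : Amb | ∀ a : ℕ, p.1 (a, p.2 a) = 0 ∧ p.1 (p.2 a, a) = 0})) := by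
    ext p; simp only [TableC, Set.mem_setOf_eq, Set.mem_inter_iff, and_assoc]
  rw [heq]
  exact h1.inter (h2.inter (h3.inter h4))

noncomputable def embG (G : ↥GroupTables) : Amb := (G.1, invF G)

lemma continuous_embG : Continuous embG := by
  refine Continuous.prodMk continuous_subtype_val ?_
  refine continuous_pi fun a => ?_
  apply continuous_of_locally_eq
  intro G
  have h1 : ∀ᶠ H : ↥GroupTables in 𝓝 G, H.1 (a, invF G a) = G.1 (a, invF G a) :=
    eventually_eq_of_cont ((continuous_apply _).comp continuous_subtype_val) G
  have h2 : ∀ᶠ H : ↥GroupTables in 𝓝 G, H.1 (invF G a, a) = G.1 (invF G a, a) :=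
    eventually_eq_of_cont ((continuous_apply _).comp continuous_subtype_val) G
  filter_upwards [h1, h2] with H e1 e2
  exact tinv_unique H.2 (invF_spec H a).2 (e1.trans (invF_spec G a).1)

lemma range_embG : Set.range embG = TableC := by
  ext p
  constructor
  · rintro ⟨G, rfl⟩
    exact ⟨G.2.1, G.2.2.1, G.2.2.2.1, fun a => invF_spec G a⟩
  · rintro ⟨ha, hr, hl, hi⟩
    have hmem : p.1 ∈ GroupTables := ⟨ha, hr, hl, fun a => ⟨p.2 a, (hi a).1, (hi a).2⟩⟩
    refine ⟨⟨p.1, hmem⟩, ?_⟩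
    have : invF ⟨p.1, hmem⟩ = p.2 := by
      funext a
      exact tinv_unique hmem (invF_spec ⟨p.1, hmem⟩ a).2 (hi a).1
    simp [embG, this]

noncomputable instance : PolishSpace ↥GroupTables := by
  have hemb : Topology.IsEmbedding embG := by
    refine Topology.IsEmbedding.of_comp continuous_embG continuous_fst ?_
    exact Topology.IsEmbedding.subtypeVal
  have hce : Topology.IsClosedEmbedding embG := ⟨hemb, by rw [range_embG]; exact isClosed_tableC⟩
  exact hce.polishSpace

instance : BaireSpace ↥GroupTables := by
  letI h := TopologicalSpace.upgradeIsCompletelyMetrizable ↥GroupTables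
  letI m : MetricSpace ↥GroupTables := h.toMetricSpace
  letI u : UniformSpace ↥GroupTables := m.toUniformSpace
  haveI c : @CompleteSpace ↥GroupTables u := h.toCompleteSpace
  haveI cg : (@uniformity ↥GroupTables u).IsCountablyGenerated := by
    exact @EMetric.instIsCountablyGeneratedUniformity _ m.toPseudoMetricSpace.toPseudoEMetricSpace
  exact BaireSpace.of_completelyPseudoMetrizable

end Baire

section Action

/-- The relabeling action of permutations of `ℕ` on tables. -/
def act (π : ℕ ≃ ℕ) (m : ℕ × ℕ → ℕ) : ℕ × ℕ → ℕ :=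
  fun p => π (m (π.symm p.1, π.symm p.2))

lemma act_act (π : ℕ ≃ ℕ) (m : ℕ × ℕ → ℕ) : act π.symm (act π m) = m := by
  funext p
  simp [act]

lemma act_act' (π : ℕ ≃ ℕ) (m : ℕ × ℕ → ℕ) : act π (act π.symm m) = m := by
  have := act_act π.symm m
  rwa [Equiv.symm_symm] at this

lemma act_mem {π : ℕ ≃ ℕ} (hπ : π 0 = 0) {m : ℕ × ℕ → ℕ} (hm : m ∈ GroupTables) :
    act π m ∈ GroupTables := by
  have h0 : π.symm 0 = 0 := π.symm_apply_eq.mpr hπ.symm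
  obtain ⟨ha, hr, hl, hi⟩ := hm
  refine ⟨fun a b c => ?_, fun a => ?_, fun a => ?_, fun a => ?_⟩
  · simp only [act, Equiv.symm_apply_apply]
    rw [ha]
  · simp only [act, h0]
    rw [hr, Equiv.apply_symm_apply]
  · simp only [act, h0]
    rw [hl, Equiv.apply_symm_apply]
  · obtain ⟨b, hb1, hb2⟩ := hi (π.symm a)
    refine ⟨π b, ?_, ?_⟩ <;> simp only [act, Equiv.symm_apply_apply]
    · rw [hb1, hπ]
    · rw [hb2, hπ]

lemma continuous_act (π : ℕ ≃ ℕ) : Continuous (act π) := by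
  refine continuous_pi fun p => ?_
  exact (continuous_of_discreteTopology (f := π)).comp
    (continuous_apply (π.symm p.1, π.symm p.2))

/-- The relabeling action as a homeomorphism of `𝒢`. -/
def actHomeo (π : ℕ ≃ ℕ) (hπ : π 0 = 0) : ↥GroupTables ≃ₜ ↥GroupTables where
  toFun G := ⟨act π G.1, act_mem hπ G.2⟩
  invFun G := ⟨act π.symm G.1, act_mem (π.symm_apply_eq.mpr hπ.symm) G.2⟩
  left_inv G := Subtype.ext (act_act π G.1)
  right_inv G := Subtype.ext (act_act' π G.1)
  continuous_toFun := Continuous.subtype_mk ((continuous_act π).comp continuous_subtype_val) _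
  continuous_invFun := Continuous.subtype_mk ((continuous_act π.symm).comp continuous_subtype_val) _

/-- Relabeled tables give isomorphic groups. -/
noncomputable def actMulEquiv (π : ℕ ≃ ℕ) (hπ : π 0 = 0) (G : ↥GroupTables) :
    Carrier G ≃* Carrier (actHomeo π hπ G) :=
  { π with
    map_mul' := fun a b => by
      show π (G.1 (a, b)) = act π G.1 (π a, π b)
      simp [act]
      exact congrArg G.1 (Prod.ext (π.symm_apply_apply a).symm (π.symm_apply_apply b).symm) }

end Action

section Key

lemma pullback_mem {K : Type*} [Group K] (e : ℕ ≃ K) (he : e 0 = 1) :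
    (fun p : ℕ × ℕ => e.symm (e p.1 * e p.2)) ∈ GroupTables := by
  refine ⟨fun a b c => ?_, fun a => ?_, fun a => ?_, fun a => ?_⟩
  · simp [Equiv.apply_symm_apply, mul_assoc]
  · show e.symm (e a * e 0) = a
    rw [he, mul_one, Equiv.symm_apply_apply]
  · show e.symm (e 0 * e a) = a
    rw [he, one_mul, Equiv.symm_apply_apply]
  · refine ⟨e.symm (e a)⁻¹, ?_, ?_⟩ <;>
      simp [Equiv.apply_symm_apply, ← he]

lemma exists_equiv_extend {β : Type*} [Countable β] [Infinite β] (S : Finset ℕ) (j : ℕ → β)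
    (hj : Set.InjOn j ↑S) : ∃ f : ℕ ≃ β, ∀ n ∈ S, f n = j n := by
  classical
  haveI : Infinite ((↑S : Set ℕ)ᶜ : Set ℕ) := (S.finite_toSet.infinite_compl).to_subtype
  haveI : Infinite ((j '' ↑S)ᶜ : Set β) := ((S.finite_toSet.image j).infinite_compl).to_subtype
  obtain ⟨d1⟩ := nonempty_denumerable ((↑S : Set ℕ)ᶜ : Set ℕ)
  obtain ⟨d2⟩ := nonempty_denumerable ((j '' ↑S)ᶜ : Set β)
  let e₂ : ((↑S : Set ℕ)ᶜ : Set ℕ) ≃ ((j '' ↑S)ᶜ : Set β) := @Denumerable.equiv₂ _ _ d1 d2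
  let e₁ : (↑S : Set ℕ) ≃ (j '' ↑S : Set β) := Equiv.Set.imageOfInjOn j ↑S hj
  refine ⟨(Equiv.Set.sumCompl (↑S : Set ℕ)).symm.trans
    ((e₁.sumCongr e₂).trans (Equiv.Set.sumCompl _)), fun n hn => ?_⟩
  rw [Equiv.trans_apply, Equiv.trans_apply,
    Equiv.Set.sumCompl_symm_apply_of_mem (by exact_mod_cast hn)]
  simp [e₁, Equiv.Set.imageOfInjOn]

instance (G : ↥GroupTables) : Countable (Carrier G) := inferInstanceAs (Countable ℕ)
instance (G : ↥GroupTables) : Infinite (Carrier G) := inferInstanceAs (Infinite ℕ)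

/-- Key transitivity lemma: given two tables and two finite supports, one can find a table
agreeing with the second on its support which, after a relabeling fixing `0`, agrees with
the first on its support. -/
lemma key_lemma (G₀ H₀ : ↥GroupTables) (I J : Finset (ℕ × ℕ)) :
    ∃ (π : ℕ ≃ ℕ) (k' : ℕ × ℕ → ℕ), π 0 = 0 ∧ k' ∈ GroupTables ∧
      (∀ p ∈ J, k' p = H₀.1 p) ∧ (∀ p ∈ I, act π k' p = G₀.1 p) := by
  classical
  let S : Finset ℕ := insert 0 (I.biUnion fun p => {p.1, p.2, G₀.1 p})
  let T : Finset ℕ := insert 0 (J.biUnion fun p => {p.1, p.2, H₀.1 p})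
  let jG : ℕ → Carrier G₀ × Carrier H₀ := fun n => (toC G₀ n, 1)
  let jH : ℕ → Carrier G₀ × Carrier H₀ := fun n => (1, toC H₀ n)
  have hjG : Set.InjOn jG ↑S := by
    intro a _ b _ h
    exact congrArg (fun x : Carrier G₀ × Carrier H₀ => fromC G₀ x.1) h
  have hjH : Set.InjOn jH ↑T := by
    intro a _ b _ h
    exact congrArg (fun x : Carrier G₀ × Carrier H₀ => fromC H₀ x.2) h
  obtain ⟨f, hf⟩ := exists_equiv_extend S jG hjG
  obtain ⟨g, hg⟩ := exists_equiv_extend T jH hjH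
  have hf0 : f 0 = 1 := by rw [hf 0 (Finset.mem_insert_self _ _)]; rfl
  have hg0 : g 0 = 1 := by rw [hg 0 (Finset.mem_insert_self _ _)]; rfl
  have hmulG : ∀ a b : ℕ, jG a * jG b = jG (G₀.1 (a, b)) := by
    intro a b
    show (toC G₀ a * toC G₀ b, (1 : Carrier H₀) * 1) = (toC G₀ (G₀.1 (a, b)), 1)
    rw [one_mul]; rfl
  have hmulH : ∀ a b : ℕ, jH a * jH b = jH (H₀.1 (a, b)) := by
    intro a b
    show ((1 : Carrier G₀) * 1, toC H₀ a * toC H₀ b) = (1, toC H₀ (H₀.1 (a, b)))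
    rw [one_mul]; rfl
  refine ⟨g.trans f.symm, fun p => g.symm (g p.1 * g p.2), ?_, pullback_mem g hg0, ?_, ?_⟩
  · show f.symm (g 0) = 0
    rw [hg0, ← hf0, Equiv.symm_apply_apply]
  · intro p hp
    have h1 : p.1 ∈ T := Finset.mem_insert_of_mem (Finset.mem_biUnion.2 ⟨p, hp, by simp⟩)
    have h2 : p.2 ∈ T := Finset.mem_insert_of_mem (Finset.mem_biUnion.2 ⟨p, hp, by simp⟩)
    have h3 : H₀.1 p ∈ T := Finset.mem_insert_of_mem (Finset.mem_biUnion.2 ⟨p, hp, by simp⟩)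
    show g.symm (g p.1 * g p.2) = H₀.1 p
    rw [hg p.1 h1, hg p.2 h2, hmulH]
    rw [show H₀.1 (p.1, p.2) = H₀.1 p from rfl, ← hg _ h3, Equiv.symm_apply_apply]
  · intro p hp
    have h1 : p.1 ∈ S := Finset.mem_insert_of_mem (Finset.mem_biUnion.2 ⟨p, hp, by simp⟩)
    have h2 : p.2 ∈ S := Finset.mem_insert_of_mem (Finset.mem_biUnion.2 ⟨p, hp, by simp⟩)
    have h3 : G₀.1 p ∈ S := Finset.mem_insert_of_mem (Finset.mem_biUnion.2 ⟨p, hp, by simp⟩)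
    show (g.trans f.symm) (g.symm (g ((g.trans f.symm).symm p.1) * g ((g.trans f.symm).symm p.2)))
      = G₀.1 p
    simp only [Equiv.trans_apply, Equiv.symm_trans_apply, Equiv.symm_symm,
      Equiv.apply_symm_apply]
    rw [hf p.1 h1, hf p.2 h2, hmulG]
    rw [show G₀.1 (p.1, p.2) = G₀.1 p from rfl, ← hf _ h3, Equiv.symm_apply_apply]

/-- Nonempty open subsets of `𝒢` contain basic cylinder sets. -/
lemma cylinder {W : Set ↥GroupTables} (hW : IsOpen W) {G : ↥GroupTables} (hG : G ∈ W) :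
    ∃ I : Finset (ℕ × ℕ), ∀ H : ↥GroupTables, (∀ p ∈ I, H.1 p = G.1 p) → H ∈ W := by
  obtain ⟨W₀, hW₀, rfl⟩ := isOpen_induced_iff.1 hW
  obtain ⟨I, u, hu, hsub⟩ := isOpen_pi_iff.1 hW₀ G.1 hG
  refine ⟨I, fun H hH => ?_⟩
  exact hsub fun p hp => by rw [hH p hp]; exact (hu p hp).2

end Key

section MeagreHelpers

lemma IsMeagre.union' {X : Type*} [TopologicalSpace X] {s t : Set X}
    (hs : IsMeagre s) (ht : IsMeagre t) : IsMeagre (s ∪ t) := by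
  rw [IsMeagre, Set.compl_union]
  exact Filter.inter_mem hs ht

lemma nonempty_open_not_meagre {X : Type*} [TopologicalSpace X] [BaireSpace X] {W : Set X}
    (hW : IsOpen W) (hne : W.Nonempty) (h : IsMeagre W) : False := by
  have hd : Dense Wᶜ := dense_of_mem_residual h
  obtain ⟨x, hx1, hx2⟩ := hd.inter_open_nonempty W hW hne
  exact hx2 hx1

end MeagreHelpers

/-- 0-1 law: every isomorphism-invariant subset of `𝒢` with the Baire property
(it is the symmetric difference of an open set and a meager set) is either meager
or comeager in `𝒢`. -/
theorem zero_one_law (P : Set ↥GroupTables) (hinv : IsoInvariant P)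
    (hBP : ∃ (U M : Set ↥GroupTables), IsOpen U ∧ IsMeagre M ∧ P = symmDiff U M) :
    IsMeagre P ∨ P ∈ residual ↥GroupTables := by
  obtain ⟨U, M, hU, hM, hP⟩ := hBP
  rcases Set.eq_empty_or_nonempty U with hUe | hUne
  · left
    rw [hP, hUe]
    have : symmDiff (∅ : Set ↥GroupTables) M = M := by simp [symmDiff_def]
    rwa [this]
  · right
    have hsub1 : U \ M ⊆ P := by
      intro x hx
      rw [hP]
      exact Set.mem_symmDiff.2 (Or.inl ⟨hx.1, hx.2⟩)
    have hsub2 : ∀ x, x ∈ P → x ∉ M → x ∈ U := by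
      intro x hx hm
      rcases Set.mem_symmDiff.1 (hP ▸ hx) with ⟨h1, _⟩ | ⟨h1, _⟩
      · exact h1
      · exact absurd h1 hm
    have hdense : Dense U := by
      rw [dense_iff_inter_open]
      by_contra hd
      push_neg at hd
      obtain ⟨V, hV, hVne, hVU⟩ := hd
      obtain ⟨H₀, hH₀⟩ := hVne
      obtain ⟨G₀, hG₀⟩ := hUne
      obtain ⟨I, hI⟩ := cylinder hU hG₀
      obtain ⟨J, hJ⟩ := cylinder hV hH₀
      obtain ⟨π, k', hπ0, hk', hJ', hI'⟩ := key_lemma G₀ H₀ I J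
      set A := actHomeo π hπ0 with hA
      set H' : ↥GroupTables := ⟨k', hk'⟩ with hH'
      have hH'V : H' ∈ V := hJ H' fun p hp => hJ' p hp
      have hAH' : A H' ∈ U := hI (A H') fun p hp => hI' p hp
      set W := V ∩ (⇑A ⁻¹' U) with hW
      have hWopen : IsOpen W := hV.inter (hU.preimage A.continuous)
      have hWne : W.Nonempty := ⟨H', hH'V, hAH'⟩
      have hN : IsMeagre (M ∪ ⇑A ⁻¹' M) :=
        hM.union' (hM.preimage_of_isOpenMap A.continuous A.isOpenMap)
      have hnot : ¬ W ⊆ (M ∪ ⇑A ⁻¹' M) := fun hs =>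
        nonempty_open_not_meagre hWopen hWne (hN.mono hs)
      obtain ⟨x, hxW, hxN⟩ := Set.not_subset.1 hnot
      have hxM : x ∉ M := fun h => hxN (Or.inl h)
      have hAxM : A x ∉ M := fun h => hxN (Or.inr h)
      have hAxP : A x ∈ P := hsub1 ⟨hxW.2, hAxM⟩
      have hxP : x ∈ P := (hinv x (A x) ⟨actMulEquiv π hπ0 x⟩).2 hAxP
      have hxU : x ∈ U := hsub2 x hxP hxM
      exact Set.eq_empty_iff_forall_notMem.1 hVU x ⟨hxW.1, hxU⟩
    have hUc : IsMeagre Uᶜ := by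
      rw [IsMeagre, compl_compl]
      exact residual_of_dense_open hU hdense
    have hPc : Pᶜ ⊆ Uᶜ ∪ M := by
      intro x hx
      by_cases hxM : x ∈ M
      · exact Or.inr hxM
      · exact Or.inl fun hxU => hx (hsub1 ⟨hxU, hxM⟩)
    have hmeagre : IsMeagre Pᶜ := (hUc.union' hM).mono hPc
    rwa [IsMeagre, compl_compl] at hmeagre
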